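/- Let T: ℂ[x] → ℂ[x] be the ℂ-linear map defined by T(g) = x(1−x)·g′ + 2x·g, where g′ denotes the derivative of g. Then the quotient ℂ-vector space ℂ[x]/T(ℂ[x]) has dimension 2, and the residue classes of 1 and x³ form a ℂ-basis of it. -/

import Mathlib

open Polynomial

/-- The ℂ-linear operator `T(g) = x(1−x)·g′ + 2x·g` on `ℂ[x]`. -/
noncomputable def T : Polynomial ℂ →ₗ[ℂ] Polynomial ℂ :=
  ((X * (1 - X) : Polynomial ℂ)) • (Polynomial.derivative : Polynomial ℂ →ₗ[ℂ] Polynomial ℂ) +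
    ((2 * X : Polynomial ℂ)) • (LinearMap.id : Polynomial ℂ →ₗ[ℂ] Polynomial ℂ)

noncomputable def aco (n : ℕ) : ℂ := if n = 0 then 0 else ((n:ℂ)-1)*((n:ℂ)-2)/2

lemma T_apply (g : Polynomial ℂ) : T g = X * (1 - X) * derivative g + 2 * X * g := by
  simp [T, smul_eq_mul]

lemma T_pow (n : ℕ) : T ((X:Polynomial ℂ)^n) = (n:ℂ) • X^n + ((2:ℂ) - n) • X^(n+1) := by
  rw [T_apply, derivative_X_pow]
  cases n with
  | zero =>
    simp only [Nat.cast_zero, map_zero, zero_mul, mul_zero, pow_zero, mul_one, zero_add,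
      pow_one, smul_eq_C_mul, zero_smul, sub_zero, map_sub, map_ofNat]
  | succ m =>
    simp only [Nat.add_sub_cancel, smul_eq_C_mul, Nat.cast_add, Nat.cast_one, map_add,
      map_sub, map_one, map_natCast, map_ofNat]
    ring

lemma aux_mem (n : ℕ) (hn : 3 ≤ n) :
    (X:Polynomial ℂ)^n - aco n • X^3 ∈ LinearMap.range T := by
  induction n, hn using Nat.le_induction with
  | base =>
    have : aco 3 = 1 := by norm_num [aco]
    rw [this, one_smul, sub_self]
    exact zero_mem _
  | succ n hn ih =>
    have hn2 : ((2:ℂ) - n) ≠ 0 := by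
      intro h
      have : (n:ℂ) = 2 := by linear_combination -h
      have : n = 2 := by exact_mod_cast this
      omega
    have hT : T ((X:Polynomial ℂ)^n) ∈ LinearMap.range T := ⟨_, rfl⟩
    have key : (X:Polynomial ℂ)^(n+1) - aco (n+1) • X^3 =
        ((2:ℂ) - n)⁻¹ • (T ((X:Polynomial ℂ)^n) - (n:ℂ) • ((X:Polynomial ℂ)^n - aco n • X^3)) := by
      rw [T_pow]
      have h1 : aco (n+1) = -(((2:ℂ) - n)⁻¹) * ((n:ℂ) * aco n) := by
        have hn0 : n ≠ 0 := by omega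
        simp only [aco, hn0, if_false, Nat.succ_ne_zero]
        push_cast
        field_simp
        ring
      rw [h1]
      match_scalars <;> (field_simp; try ring)
    rw [key]
    exact Submodule.smul_mem _ _ (Submodule.sub_mem _ hT (Submodule.smul_mem _ _ ih))

noncomputable def phi : Polynomial ℂ →ₗ[ℂ] ℂ :=
  Polynomial.lsum (fun n => aco n • LinearMap.id)

lemma phi_monomial (n : ℕ) (c : ℂ) : phi (monomial n c) = c * aco n := by
  simp only [phi, lsum_apply]
  rw [sum_monomial_index]
  · simp [mul_comm]
  · simp

lemma phi_pow (n : ℕ) : phi ((X:Polynomial ℂ)^n) = aco n := by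
  rw [X_pow_eq_monomial, phi_monomial, one_mul]

/-- the second coefficient relation: `n·a n + (2-n)·a (n+1) = 0`. -/
lemma aco_rel (n : ℕ) : (n:ℂ) * aco n + ((2:ℂ) - n) * aco (n+1) = 0 := by
  cases n with
  | zero => norm_num [aco]
  | succ m =>
    simp only [aco, Nat.succ_ne_zero, if_false]
    push_cast
    ring

noncomputable def lam : Polynomial ℂ →ₗ[ℂ] (Fin 2 → ℂ) :=
  LinearMap.pi ![Polynomial.leval 0, phi]

lemma lam_apply (g : Polynomial ℂ) : lam g = ![g.eval 0, phi g] := by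
  funext i
  fin_cases i <;> rfl

lemma lam_T_pow (n : ℕ) : lam (T ((X:Polynomial ℂ)^n)) = 0 := by
  rw [T_pow, lam_apply]
  funext i
  fin_cases i
  · simp only [map_add, map_smul]
    simp [eval_pow, zero_pow_eq, smul_eq_mul]
  · simp only [map_add, map_smul, phi_pow]
    simpa [smul_eq_mul] using aco_rel n

lemma range_le_ker : LinearMap.range T ≤ LinearMap.ker lam := by
  rintro _ ⟨g, rfl⟩
  rw [LinearMap.mem_ker]
  induction g using Polynomial.induction_on' with
  | add p q hp hq => rw [map_add, map_add, hp, hq, add_zero]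
  | monomial n c =>
    rw [← C_mul_X_pow_eq_monomial, ← smul_eq_C_mul, map_smul, map_smul, lam_T_pow, smul_zero]

lemma T_one : T 1 = (2:ℂ) • X := by
  have h := T_pow 0
  simp only [pow_zero, Nat.cast_zero, zero_smul, zero_add, sub_zero, pow_one] at h
  exact h

lemma X_mem : (X : Polynomial ℂ) ∈ LinearMap.range T := by
  have : (X : Polynomial ℂ) = (2:ℂ)⁻¹ • T 1 := by
    rw [T_one, smul_smul]
    norm_num
  rw [this]
  exact Submodule.smul_mem _ _ ⟨_, rfl⟩

lemma Xsq_mem : (X : Polynomial ℂ)^2 ∈ LinearMap.range T := by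
  have hTX : T X = X + X^2 := by
    have h := T_pow 1
    simp only [pow_one, Nat.cast_one, one_smul] at h
    rw [h]
    norm_num
  have : (X : Polynomial ℂ)^2 = T X - X := by rw [hTX]; ring
  rw [this]
  exact Submodule.sub_mem _ ⟨_, rfl⟩ X_mem

lemma pow_mem_all (n : ℕ) :
    (X:Polynomial ℂ)^n - (if n = 0 then (1:ℂ) else 0) • 1 - aco n • X^3 ∈ LinearMap.range T := by
  match n with
  | 0 => simp [aco]
  | 1 =>
    have ha : aco 1 = 0 := by norm_num [aco]
    rw [ha, zero_smul, sub_zero, if_neg one_ne_zero, zero_smul, sub_zero, pow_one]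
    exact X_mem
  | 2 =>
    have ha : aco 2 = 0 := by norm_num [aco]
    rw [ha, zero_smul, sub_zero, if_neg (by norm_num), zero_smul, sub_zero]
    exact Xsq_mem
  | (m+3) =>
    rw [if_neg (by omega), zero_smul, sub_zero]
    exact aux_mem (m+3) (by omega)

lemma ker_le_range : LinearMap.ker lam ≤ LinearMap.range T := by
  intro g hg
  rw [LinearMap.mem_ker, lam_apply] at hg
  have h0 : g.eval 0 = 0 := by simpa using congr_fun hg 0
  have h1 : phi g = 0 := by simpa using congr_fun hg 1
  have key : ∀ p : Polynomial ℂ,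
      p - (p.eval 0) • 1 - (phi p) • X^3 ∈ LinearMap.range T := by
    intro p
    induction p using Polynomial.induction_on' with
    | add p q hp hq =>
      have : p + q - ((p+q).eval 0) • 1 - (phi (p+q)) • X^3
          = (p - (p.eval 0) • 1 - (phi p) • X^3) + (q - (q.eval 0) • 1 - (phi q) • X^3) := by
        rw [map_add, eval_add]
        module
      rw [this]
      exact Submodule.add_mem _ hp hq
    | monomial n c =>
      rw [← C_mul_X_pow_eq_monomial, ← smul_eq_C_mul]
      have : c • (X:Polynomial ℂ)^n - ((c • (X:Polynomial ℂ)^n).eval 0) • 1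
            - (phi (c • (X:Polynomial ℂ)^n)) • X^3
          = c • ((X:Polynomial ℂ)^n - (if n = 0 then (1:ℂ) else 0) • 1 - aco n • X^3) := by
        rw [map_smul, phi_pow, eval_smul, eval_pow, eval_X, zero_pow_eq, smul_eq_mul]
        by_cases hn : n = 0 <;> simp only [hn, if_true, if_false, mul_one, mul_zero, smul_eq_mul] <;> module
      rw [this]
      exact Submodule.smul_mem _ _ (pow_mem_all n)
  have := key g
  rw [h0, h1, zero_smul, zero_smul, sub_zero, sub_zero] at this
  exact this

lemma lam_surj : Function.Surjective lam := by
  intro v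
  refine ⟨C (v 0) + (v 1) • X^3, ?_⟩
  rw [map_add, map_smul]
  have hC : lam (C (v 0)) = ![v 0, 0] := by
    rw [lam_apply]
    have : phi (C (v 0)) = 0 := by
      rw [← monomial_zero_left, phi_monomial]
      simp [aco]
    rw [this]
    simp
  have hX : lam ((X:Polynomial ℂ)^3) = ![0, 1] := by
    rw [lam_apply, phi_pow]
    norm_num [aco]
  rw [hC, hX]
  funext i
  fin_cases i <;> simp

noncomputable def qmap : (Polynomial ℂ ⧸ LinearMap.range T) →ₗ[ℂ] (Fin 2 → ℂ) :=
  Submodule.liftQ _ lam range_le_ker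

lemma qmap_bij : Function.Bijective qmap := by
  constructor
  · rw [← LinearMap.ker_eq_bot]
    exact Submodule.ker_liftQ_eq_bot _ _ _ ker_le_range
  · intro v
    obtain ⟨g, hg⟩ := lam_surj v
    exact ⟨Submodule.Quotient.mk g, by rw [qmap, Submodule.liftQ_apply, hg]⟩

noncomputable def eqv : (Polynomial ℂ ⧸ LinearMap.range T) ≃ₗ[ℂ] (Fin 2 → ℂ) :=
  LinearEquiv.ofBijective qmap qmap_bij

lemma eqv_mk (g : Polynomial ℂ) : eqv (Submodule.Quotient.mk g) = lam g := by
  simp [eqv, qmap, LinearEquiv.ofBijective_apply]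

/-- the quotient `ℂ[x]/T(ℂ[x])` is a 2-dimensional ℂ-vector space and
the classes of `1` and `x³` form a ℂ-basis of it. -/
theorem stmt14 :
    Module.finrank ℂ (Polynomial ℂ ⧸ LinearMap.range T) = 2 ∧
    ∃ B : Module.Basis (Fin 2) ℂ (Polynomial ℂ ⧸ LinearMap.range T),
      B 0 = Submodule.Quotient.mk (1 : Polynomial ℂ) ∧
      B 1 = Submodule.Quotient.mk ((X : Polynomial ℂ) ^ 3) := by
  constructor
  · rw [eqv.finrank_eq]
    simp
  · refine ⟨Module.Basis.ofEquivFun eqv, ?_, ?_⟩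
    · have h : eqv (Submodule.Quotient.mk (1 : Polynomial ℂ)) = (Pi.single 0 1 : Fin 2 → ℂ) := by
        rw [eqv_mk, lam_apply]
        have : phi (1 : Polynomial ℂ) = 0 := by
          rw [show (1 : Polynomial ℂ) = X^0 by simp, phi_pow]
          simp [aco]
        rw [this]
        funext i
        fin_cases i <;> simp
      rw [Module.Basis.coe_ofEquivFun]
      show eqv.symm (Pi.single 0 1) = _
      rw [← h, LinearEquiv.symm_apply_apply]
    · have h : eqv (Submodule.Quotient.mk ((X:Polynomial ℂ)^3)) = (Pi.single 1 1 : Fin 2 → ℂ) := by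
        rw [eqv_mk, lam_apply, phi_pow]
        have : aco 3 = 1 := by norm_num [aco]
        rw [this]
        funext i
        fin_cases i <;> simp
      rw [Module.Basis.coe_ofEquivFun]
      show eqv.symm (Pi.single 1 1) = _
      rw [← h, LinearEquiv.symm_apply_apply]
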